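/- Let β ∈ (-1,0), p ≥ 1, α ∈ (0,1) with 1 + βp > 0 and 3 + (α+β-3)p > 0, and let T > 0. Then ∫₀ᵀ ∫ₛᵀ (u-s)^{(α-2)p} ( ∫ₛᵘ |(u-v+ε)^β - (u-v)^β|^p dv ) du ds → 0 as ε → 0⁺. -/

import Mathlib

open MeasureTheory Real Filter

lemma aux_pt (β θ ε w : ℝ) (hβ1 : -1 ≤ β) (hβ0 : β ≤ 0)
    (hθ0 : 0 ≤ θ) (hθ1 : θ ≤ 1) (hε : 0 < ε) (hw : 0 < w) :
    |(w + ε) ^ β - w ^ β| ≤ ε ^ θ * w ^ (β - θ) := by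
  have hwε : (0:ℝ) < w + ε := by linarith
  have h1 : (w + ε) ^ β ≤ w ^ β :=
    Real.rpow_le_rpow_of_nonpos hw (by linarith) hβ0
  rw [abs_of_nonpos (by linarith), neg_sub]
  rcases le_total w ε with h | h
  · calc w ^ β - (w + ε) ^ β ≤ w ^ β := by
          have := Real.rpow_nonneg hwε.le β; linarith
      _ = w ^ (β - θ) * w ^ θ := by rw [← Real.rpow_add hw]; ring_nf
      _ ≤ w ^ (β - θ) * ε ^ θ := by
          have := Real.rpow_le_rpow hw.le h hθ0
          have := Real.rpow_nonneg hw.le (β - θ)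
          nlinarith
      _ = ε ^ θ * w ^ (β - θ) := mul_comm _ _
  · have hA : 0 < w ^ β := Real.rpow_pos_of_pos hw β
    have key : w ^ β - (w + ε) ^ β ≤ ε * w ^ (β - 1) := by
      have hb : (1:ℝ) ≤ 1 + ε / w := by
        have : 0 < ε / w := div_pos hε hw
        linarith
      have h2 : (1 + ε/w) ^ (-1:ℝ) ≤ (1 + ε/w) ^ β :=
        Real.rpow_le_rpow_of_exponent_le hb hβ1
      have h3 : (w + ε) ^ β = w ^ β * (1 + ε/w) ^ β := by
        rw [← Real.mul_rpow hw.le (by linarith)]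
        congr 1; field_simp
      have h4 : (1 + ε/w) ^ (-1:ℝ) = w / (w + ε) := by
        rw [Real.rpow_neg_one]; rw [eq_div_iff hwε.ne']; field_simp
      have h5 : w ^ (β - 1) = w ^ β / w := by
        rw [Real.rpow_sub hw, Real.rpow_one]
      have h6 : w ^ β * (w / (w + ε)) ≤ (w + ε) ^ β := by
        rw [h3, ← h4]; exact mul_le_mul_of_nonneg_left h2 hA.le
      have h7 : w ^ β - w ^ β * (w / (w + ε)) ≤ ε * (w ^ β / w) := by
        have hkey : w ^ β - w ^ β * (w / (w + ε)) = w ^ β * (ε / (w + ε)) := by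
          field_simp; ring
        rw [hkey]
        rw [mul_comm ε (w ^ β / w), div_mul_eq_mul_div, mul_div_assoc]
        apply mul_le_mul_of_nonneg_left _ hA.le
        rw [div_le_div_iff₀ hwε hw]
        nlinarith
      rw [h5]; linarith
    calc w ^ β - (w + ε) ^ β ≤ ε * w ^ (β - 1) := key
      _ = ε ^ θ * (ε ^ (1 - θ) * w ^ (β - 1)) := by
          rw [← mul_assoc, ← Real.rpow_add hε]
          norm_num
      _ ≤ ε ^ θ * (w ^ (1 - θ) * w ^ (β - 1)) := by
          have h8 : ε ^ (1 - θ) ≤ w ^ (1 - θ) :=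
            Real.rpow_le_rpow hε.le h (by linarith)
          have h9 : 0 ≤ w ^ (β - 1) := Real.rpow_nonneg hw.le _
          have h10 : 0 ≤ ε ^ θ := Real.rpow_nonneg hε.le _
          exact mul_le_mul_of_nonneg_left (mul_le_mul_of_nonneg_right h8 h9) h10
      _ = ε ^ θ * w ^ (β - θ) := by rw [← Real.rpow_add hw]; ring_nf

/-- Condition `(C_p)(iii)` for the kernel `g(u) = u^β`, `β ∈ (-1,0)`: if `p ≥ 1`,
`α ∈ (0,1)`, `1 + βp > 0`, `3 + (α+β-3)p > 0` and `T > 0`, then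
`∫₀ᵀ ∫ₛᵀ (u-s)^{(α-2)p} (∫ₛᵘ |(u-v+ε)^β - (u-v)^β|^p dv) du ds → 0` as `ε → 0⁺`. -/
theorem stmt_13 (β p α T : ℝ) (hβ : β ∈ Set.Ioo (-1:ℝ) 0) (hp : 1 ≤ p)
    (hα : α ∈ Set.Ioo (0:ℝ) 1) (h1 : 0 < 1 + β * p) (h2 : 0 < 3 + (α + β - 3) * p)
    (hT : 0 < T) :
    Tendsto (fun ε : ℝ => ∫ s in (0:ℝ)..T, ∫ u in s..T, (u - s) ^ ((α - 2) * p) *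
        ∫ v in s..u, |(u - v + ε) ^ β - (u - v) ^ β| ^ p)
      (nhdsWithin 0 (Set.Ioi 0)) (nhds 0) := by
  obtain ⟨hβ1, hβ0⟩ := hβ
  obtain ⟨hα0, hα1⟩ := hα
  have hp0 : (0:ℝ) < p := by linarith
  obtain ⟨θ, hθ0, hθ1, hqpos, hrgt⟩ : ∃ θ : ℝ, 0 < θ ∧ θ ≤ 1 ∧
      0 < (β - θ)*p + 1 ∧ -1 < (α - 2)*p + ((β - θ)*p + 1) := by
    set a : ℝ := β + 1/p with hadef
    set b : ℝ := ((α+β-2)*p+2)/p with hbdef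
    have ha : 0 < a := by
      have hb' : a = (1+β*p)/p := by rw [hadef]; field_simp; ring
      rw [hb']; exact div_pos h1 hp0
    have hb : 0 < b := by
      have : 0 < (α+β-2)*p+2 := by nlinarith
      exact div_pos this hp0
    set δ : ℝ := min a b with hδdef
    have hδpos : 0 < δ := lt_min ha hb
    have hδa : δ ≤ a := by rw [hδdef]; exact min_le_left a b
    have hδb : δ ≤ b := by rw [hδdef]; exact min_le_right a b
    refine ⟨min (δ/2) 1, lt_min (by linarith) one_pos, min_le_right _ _, ?_, ?_⟩
    · have h3 : min (δ/2) 1 < a :=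
        lt_of_le_of_lt (min_le_left _ _) (lt_of_lt_of_le (half_lt_self hδpos) hδa)
      have h4 : (0:ℝ) < (a - min (δ/2) 1)*p := mul_pos (by linarith) hp0
      have h5 : (a - min (δ/2) 1)*p = (β - min (δ/2) 1)*p + 1 := by
        rw [hadef]; field_simp; ring
      rw [h5] at h4; linarith
    · have h3 : min (δ/2) 1 < b :=
        lt_of_le_of_lt (min_le_left _ _) (lt_of_lt_of_le (half_lt_self hδpos) hδb)
      have h4 : min (δ/2) 1 * p < (α+β-2)*p+2 := by
        rw [hbdef, lt_div_iff₀ hp0] at h3; linarith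
      nlinarith
  obtain ⟨q, hqdef, hq⟩ : ∃ q : ℝ, q = (β - θ)*p + 1 ∧ 0 < q := ⟨_, rfl, hqpos⟩
  obtain ⟨r, hrdef, hr⟩ : ∃ r : ℝ, r = (α - 2)*p + q ∧ -1 < r := ⟨_, rfl, by rw [hqdef]; exact hrgt⟩
  have hr1 : 0 < r + 1 := by linarith
  obtain ⟨C, hCdef⟩ : ∃ C : ℝ, C = ∫ s in (0:ℝ)..T, (T - s)^(r+1) / (q*(r+1)) := ⟨_, rfl⟩
  -- the key bound for each fixed positive ε
  have key : ∀ ε : ℝ, 0 < ε →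
      (0 ≤ ∫ s in (0:ℝ)..T, ∫ u in s..T, (u - s) ^ ((α - 2) * p) *
        ∫ v in s..u, |(u - v + ε) ^ β - (u - v) ^ β| ^ p) ∧
      ((∫ s in (0:ℝ)..T, ∫ u in s..T, (u - s) ^ ((α - 2) * p) *
        ∫ v in s..u, |(u - v + ε) ^ β - (u - v) ^ β| ^ p) ≤ ε ^ (θ*p) * C) := by
    intro ε hε
    set f : ℝ → ℝ := fun w => |(w + ε) ^ β - w ^ β| ^ p with hfdef
    have hf_meas : Measurable f := by
      apply Measurable.pow _ measurable_const
      exact ((((measurable_id.add_const ε).pow measurable_const).sub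
        (measurable_id.pow measurable_const)).abs)
    have hf_nonneg : ∀ w, 0 ≤ f w := fun w => Real.rpow_nonneg (abs_nonneg _) p
    have hf_le : ∀ w, 0 < w → f w ≤ ε^(θ*p) * w^((β-θ)*p) := by
      intro w hw
      have h3 : |(w + ε) ^ β - w ^ β| ≤ ε ^ θ * w ^ (β - θ) :=
        aux_pt β θ ε w hβ1.le hβ0.le hθ0.le hθ1 hε hw
      have h4 : f w ≤ (ε ^ θ * w ^ (β - θ)) ^ p :=
        Real.rpow_le_rpow (abs_nonneg _) h3 hp0.le
      have h5 : (ε ^ θ * w ^ (β - θ)) ^ p = ε^(θ*p) * w^((β-θ)*p) := by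
        rw [Real.mul_rpow (Real.rpow_nonneg hε.le _) (Real.rpow_nonneg hw.le _),
          ← Real.rpow_mul hε.le, ← Real.rpow_mul hw.le]
      rw [h5] at h4; exact h4
    have hg_int : ∀ L : ℝ, 0 ≤ L →
        IntegrableOn (fun w => ε^(θ*p) * w^((β-θ)*p)) (Set.Ioc 0 L) volume := by
      intro L hL
      have h3 : IntervalIntegrable (fun w : ℝ => w^((β-θ)*p)) volume 0 L :=
        intervalIntegral.intervalIntegrable_rpow' (by linarith)
      have h4 := h3.const_mul (ε^(θ*p))
      rwa [intervalIntegrable_iff_integrableOn_Ioc_of_le hL] at h4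
    have hf_int : ∀ L : ℝ, 0 ≤ L → IntegrableOn f (Set.Ioc 0 L) volume := by
      intro L hL
      apply Integrable.mono' (hg_int L hL) hf_meas.aestronglyMeasurable.restrict
      filter_upwards [ae_restrict_mem measurableSet_Ioc] with w hw
      rw [Real.norm_eq_abs, abs_of_nonneg (hf_nonneg w)]
      exact hf_le w hw.1
    set H : ℝ → ℝ := fun L => ∫ w in (0:ℝ)..L, f w with hHdef
    have hH_nonneg : ∀ L, 0 ≤ L → 0 ≤ H L := fun L hL =>
      intervalIntegral.integral_nonneg hL (fun w _ => hf_nonneg w)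
    have hH_le : ∀ L, 0 ≤ L → H L ≤ ε^(θ*p) * L^q / q := by
      intro L hL
      have h3 : H L = ∫ w in Set.Ioc 0 L, f w := intervalIntegral.integral_of_le hL
      have h4 : (∫ w in Set.Ioc 0 L, f w) ≤ ∫ w in Set.Ioc 0 L, ε^(θ*p) * w^((β-θ)*p) :=
        setIntegral_mono_on (hf_int L hL) (hg_int L hL) measurableSet_Ioc
          (fun w hw => hf_le w hw.1)
      have h5 : (∫ w in Set.Ioc 0 L, ε^(θ*p) * w^((β-θ)*p))
          = ε^(θ*p) * ∫ w in Set.Ioc 0 L, w^((β-θ)*p) := integral_const_mul _ _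
      have h6 : (∫ w in Set.Ioc 0 L, w^((β-θ)*p)) = L^q / q := by
        rw [← intervalIntegral.integral_of_le hL,
          integral_rpow (Or.inl (by linarith : (-1:ℝ) < (β-θ)*p))]
        rw [Real.zero_rpow (by rw [hqdef] at hq; linarith : ((β-θ)*p+1) ≠ 0), hqdef]
        ring
      rw [h3]
      calc (∫ w in Set.Ioc 0 L, f w) ≤ _ := h4
        _ = ε^(θ*p) * (L^q / q) := by rw [h5, h6]
        _ = ε^(θ*p) * L^q / q := by ring
    have hH_cont : ContinuousOn H (Set.Icc 0 T) := by
      have h3 : IntegrableOn f (Set.uIcc 0 T) volume := by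
        rw [Set.uIcc_of_le hT.le, integrableOn_Icc_iff_integrableOn_Ioc]
        exact hf_int T hT.le
      have h4 := intervalIntegral.continuousOn_primitive_interval h3
      rwa [Set.uIcc_of_le hT.le] at h4
    set φ : ℝ → ℝ := fun L => L^((α-2)*p) * H L with hφdef
    have hφ_nonneg : ∀ L, 0 ≤ L → 0 ≤ φ L := fun L hL =>
      mul_nonneg (Real.rpow_nonneg hL _) (hH_nonneg L hL)
    have hφ_le : ∀ L, 0 < L → L ≤ T → φ L ≤ ε^(θ*p)/q * L^r := by
      intro L hL hLT
      have h3 : φ L ≤ L^((α-2)*p) * (ε^(θ*p) * L^q / q) :=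
        mul_le_mul_of_nonneg_left (hH_le L hL.le) (Real.rpow_nonneg hL.le _)
      have hLr : L^((α-2)*p) * L^q = L^r := by rw [← Real.rpow_add hL, hrdef]
      have h4 : L^((α-2)*p) * (ε^(θ*p) * L^q / q) = ε^(θ*p)/q * L^r := by
        rw [← hLr]; ring
      rw [h4] at h3; exact h3
    have hgr_int : ∀ M : ℝ, 0 ≤ M →
        IntegrableOn (fun L => ε^(θ*p)/q * L^r) (Set.Ioc 0 M) volume := by
      intro M hM
      have h3 : IntervalIntegrable (fun L : ℝ => L^r) volume 0 M :=
        intervalIntegral.intervalIntegrable_rpow' hr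
      have h4 := h3.const_mul (ε^(θ*p)/q)
      rwa [intervalIntegrable_iff_integrableOn_Ioc_of_le hM] at h4
    have hφ_int : ∀ M : ℝ, 0 ≤ M → M ≤ T → IntegrableOn φ (Set.Ioc 0 M) volume := by
      intro M hM hMT
      apply Integrable.mono' (hgr_int M hM)
      · apply AEStronglyMeasurable.mul
        · exact (measurable_id.pow measurable_const).aestronglyMeasurable.restrict
        · exact ((hH_cont.mono (fun x hx => ⟨hx.1.le, hx.2.trans hMT⟩)).aestronglyMeasurable
            measurableSet_Ioc)
      · filter_upwards [ae_restrict_mem measurableSet_Ioc] with L hL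
        rw [Real.norm_eq_abs, abs_of_nonneg (hφ_nonneg L hL.1.le)]
        exact hφ_le L hL.1 (hL.2.trans hMT)
    set Φ : ℝ → ℝ := fun M => ∫ L in (0:ℝ)..M, φ L with hΦdef
    have hΦ_nonneg : ∀ M, 0 ≤ M → 0 ≤ Φ M := fun M hM =>
      intervalIntegral.integral_nonneg hM (fun L hL => hφ_nonneg L hL.1)
    have hΦ_le : ∀ M, 0 ≤ M → M ≤ T → Φ M ≤ ε^(θ*p) * (M^(r+1) / (q*(r+1))) := by
      intro M hM hMT
      have h3 : Φ M = ∫ L in Set.Ioc 0 M, φ L := intervalIntegral.integral_of_le hM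
      have h4 : (∫ L in Set.Ioc 0 M, φ L) ≤ ∫ L in Set.Ioc 0 M, ε^(θ*p)/q * L^r :=
        setIntegral_mono_on (hφ_int M hM hMT) (hgr_int M hM) measurableSet_Ioc
          (fun L hL => hφ_le L hL.1 (hL.2.trans hMT))
      have h5 : (∫ L in Set.Ioc 0 M, ε^(θ*p)/q * L^r)
          = ε^(θ*p)/q * ∫ L in Set.Ioc 0 M, L^r := integral_const_mul _ _
      have h6 : (∫ L in Set.Ioc 0 M, L^r) = M^(r+1) / (r+1) := by
        rw [← intervalIntegral.integral_of_le hM, integral_rpow (Or.inl hr),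
          Real.zero_rpow (by linarith : r + 1 ≠ 0)]
        ring
      rw [h3]
      calc (∫ L in Set.Ioc 0 M, φ L) ≤ _ := h4
        _ = ε^(θ*p)/q * (M^(r+1)/(r+1)) := by rw [h5, h6]
        _ = ε^(θ*p) * (M^(r+1) / (q*(r+1))) := by
            rw [div_mul_div_comm, mul_div_assoc]
    have hΦ_cont : ContinuousOn Φ (Set.Icc 0 T) := by
      have h3 : IntegrableOn φ (Set.uIcc 0 T) volume := by
        rw [Set.uIcc_of_le hT.le, integrableOn_Icc_iff_integrableOn_Ioc]
        exact hφ_int T hT.le le_rfl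
      have h4 := intervalIntegral.continuousOn_primitive_interval h3
      rwa [Set.uIcc_of_le hT.le] at h4
    -- rewrite the triple integral
    have hrw : (∫ s in (0:ℝ)..T, ∫ u in s..T, (u - s) ^ ((α - 2) * p) *
        ∫ v in s..u, |(u - v + ε) ^ β - (u - v) ^ β| ^ p)
        = ∫ s in (0:ℝ)..T, Φ (T - s) := by
      refine intervalIntegral.integral_congr fun s _ => ?_
      have hinner : ∀ u : ℝ, (u - s) ^ ((α - 2) * p) *
          (∫ v in s..u, |(u - v + ε) ^ β - (u - v) ^ β| ^ p) = φ (u - s) := by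
        intro u
        have h3 := intervalIntegral.integral_comp_sub_left (a := s) (b := u) f u
        rw [sub_self] at h3
        simp only [hfdef] at h3
        rw [hφdef, hHdef]
        dsimp only
        rw [← h3]
      simp only [hinner]
      have h4 := intervalIntegral.integral_comp_sub_right (a := s) (b := T) φ s
      rw [sub_self] at h4
      exact h4
    rw [hrw]
    constructor
    · exact intervalIntegral.integral_nonneg hT.le
        (fun s hs => hΦ_nonneg (T - s) (by linarith [hs.2]))
    · have hint1 : IntervalIntegrable (fun s => Φ (T - s)) volume 0 T := by
        apply ContinuousOn.intervalIntegrable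
        rw [Set.uIcc_of_le hT.le]
        apply hΦ_cont.comp (continuous_const.sub continuous_id).continuousOn
        intro s hs
        simp only [id_eq, Set.mem_Icc, Pi.sub_apply] at hs ⊢
        constructor <;> linarith [hs.1, hs.2]
      have hint2 : IntervalIntegrable
          (fun s => ε^(θ*p) * ((T - s)^(r+1) / (q*(r+1)))) volume 0 T := by
        apply Continuous.intervalIntegrable
        have hc : Continuous (fun s : ℝ => (T - s)^(r+1)) :=
          (continuous_const.sub continuous_id).rpow_const (fun s => Or.inr hr1.le)
        exact continuous_const.mul (hc.div_const _)
      calc (∫ s in (0:ℝ)..T, Φ (T - s))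
          ≤ ∫ s in (0:ℝ)..T, ε^(θ*p) * ((T - s)^(r+1) / (q*(r+1))) := by
            apply intervalIntegral.integral_mono_on hT.le hint1 hint2
            intro s hs
            exact hΦ_le (T - s) (by linarith [hs.2]) (by linarith [hs.1])
        _ = ε^(θ*p) * C := by
            rw [hCdef, ← intervalIntegral.integral_const_mul]
  -- squeeze
  apply squeeze_zero' (g := fun ε => ε ^ (θ*p) * C)
  · filter_upwards [self_mem_nhdsWithin] with ε hε
    exact (key ε hε).1
  · filter_upwards [self_mem_nhdsWithin] with ε hε
    exact (key ε hε).2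
  · have h0 : Tendsto (fun ε : ℝ => ε ^ (θ*p)) (nhdsWithin 0 (Set.Ioi 0)) (nhds 0) := by
      have hc := (Real.continuousAt_rpow_const 0 (θ*p) (Or.inr (by positivity))).tendsto
      rw [Real.zero_rpow (by positivity)] at hc
      exact hc.mono_left nhdsWithin_le_nhds
    simpa using h0.mul_const C
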